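/- Let Θ = {θ_j^I} be a suitable set of moduli of continuity, and let {ν_n}_{n≥1} be a sequence of parametric b-measures on ℝ^N converging to a parametric b-measure ν₀ in the topology σ_Θ. Then for each integer j ≥ 1, each interval I = [q₁,q₂] with rational endpoints, and all rationals p₁, p₂ with q₁ ≤ p₁ < p₂ ≤ q₂, one has lim_{n→∞} sup_{y(·)∈𝒦_j^I} |∫_{p₁}^{p₂} d(ν_n)_{y(s)} − ∫_{p₁}^{p₂} d(ν₀)_{y(s)}| = 0. -/

import Mathlib

open MeasureTheory Set Filter Topology

/-- A (continuous real) b-measure: a set function on the bounded Borel subsets of `ℝ`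
which vanishes on `∅`, is countably additive over countable pairwise disjoint families
of bounded Borel sets with bounded union, and vanishes on singletons. -/
structure IsBMeasure (μ : Set ℝ → ℝ) : Prop where
  empty : μ ∅ = 0
  countably_additive : ∀ A : ℕ → Set ℝ, (∀ n, MeasurableSet (A n)) →
    (∀ n, Bornology.IsBounded (A n)) → Pairwise (Function.onFun Disjoint A) →
    Bornology.IsBounded (⋃ n, A n) →
    HasSum (fun n => μ (A n)) (μ (⋃ n, A n))
  singleton : ∀ t : ℝ, μ {t} = 0

/-- A locally finite atomless Borel measure on `ℝ`. -/
def GoodMeasure (m : Measure ℝ) : Prop :=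
  IsLocallyFiniteMeasure m ∧ ∀ t : ℝ, m {t} = 0

/-- `P` is a finite Borel partition of `A`. -/
def IsBorelPartition (A : Set ℝ) {n : ℕ} (P : Fin n → Set ℝ) : Prop :=
  (∀ i, MeasurableSet (P i)) ∧ Pairwise (Function.onFun Disjoint P) ∧ (⋃ i, P i) = A

/-- `|μ| ≤ m` : total-variation bound of the set function `μ` by the measure `m`,
expressed through finite Borel partitions of bounded Borel sets. -/
def TVLE (μ : Set ℝ → ℝ) (m : Measure ℝ) : Prop :=
  ∀ A : Set ℝ, Bornology.IsBounded A → MeasurableSet A →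
    ∀ (n : ℕ) (P : Fin n → Set ℝ), IsBorelPartition A P →
      ∑ i, |μ (P i)| ≤ (m A).toReal

/-- Partition-sum bound `Σ |μ₁(Aᵢ) - μ₂(Aᵢ)| ≤ c · l(A)` for the difference of two
set functions, over finite Borel partitions of bounded Borel sets. -/
def DiffLE (μ₁ μ₂ : Set ℝ → ℝ) (c : ℝ) (l : Measure ℝ) : Prop :=
  ∀ A : Set ℝ, Bornology.IsBounded A → MeasurableSet A →
    ∀ (n : ℕ) (P : Fin n → Set ℝ), IsBorelPartition A P →
      ∑ i, |μ₁ (P i) - μ₂ (P i)| ≤ c * (l A).toReal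

variable {E : Type*} [NormedAddCommGroup E]

/-- `m` is an m-bound of `ν` on the closed ball of radius `j`. -/
def HasMBound (ν : E → Set ℝ → ℝ) (j : ℕ) (m : Measure ℝ) : Prop :=
  GoodMeasure m ∧ ∀ y : E, ‖y‖ ≤ (j : ℝ) → TVLE (ν y) m

/-- `l` is an l-bound of `ν` on the closed ball of radius `j`, for the modulus `ω`. -/
def HasLBound (ω : ℝ → ℝ) (ν : E → Set ℝ → ℝ) (j : ℕ) (l : Measure ℝ) : Prop :=
  GoodMeasure l ∧ ∀ y₁ y₂ : E, ‖y₁‖ ≤ (j : ℝ) → ‖y₂‖ ≤ (j : ℝ) →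
    DiffLE (ν y₁) (ν y₂) (ω ‖y₁ - y₂‖) l

/-- A non-decreasing family of moduli of continuity `{ω_j}`. -/
structure IsModulusFamily (ω : ℕ → ℝ → ℝ) : Prop where
  continuousOn : ∀ j, ContinuousOn (ω j) (Ici 0)
  monotoneOn : ∀ j, MonotoneOn (ω j) (Ici 0)
  map_zero : ∀ j, ω j 0 = 0
  nonneg : ∀ j x, 0 ≤ x → 0 ≤ ω j x
  mono_index : ∀ j x, 0 ≤ x → ω j x ≤ ω (j + 1) x

/-- A parametric b-measure on `E` with respect to the family of moduli `ω`. -/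
def IsParamBMeasure (ω : ℕ → ℝ → ℝ) (ν : E → Set ℝ → ℝ) : Prop :=
  (∀ y, IsBMeasure (ν y)) ∧
    ∀ j : ℕ, 1 ≤ j → ∃ m l : Measure ℝ, HasMBound ν j m ∧ HasLBound (ω j) ν j l

/-- A tagged partition of `[a,b]`. -/
structure TaggedPartition (a b : ℝ) where
  k : ℕ
  k_pos : 0 < k
  t : ℕ → ℝ
  tag : ℕ → ℝ
  left : t 0 = a
  right : t k = b
  lt : ∀ i < k, t i < t (i + 1)
  tag_mem : ∀ i < k, tag i ∈ Set.Icc (t i) (t (i + 1))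

/-- The mesh of the tagged partition is `< δ`. -/
def TaggedPartition.MeshLT {a b : ℝ} (P : TaggedPartition a b) (δ : ℝ) : Prop :=
  ∀ i < P.k, P.t (i + 1) - P.t i < δ

/-- The Riemann sum of the parametric b-measure `ν` along the curve `y` over the
tagged partition `P`. -/
def RiemannSum (ν : E → Set ℝ → ℝ) (y : ℝ → E) {a b : ℝ} (P : TaggedPartition a b) : ℝ :=
  ∑ i ∈ Finset.range P.k, ν (y (P.tag i)) (Set.Icc (P.t i) (P.t (i + 1)))

/-- `L = ∫_a^b dν_{y(s)}` : `L` is the limit of the Riemann sums of `ν` along `y`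
over tagged partitions of `[a,b]` as the mesh tends to `0`. -/
def IsCurveIntegral (ν : E → Set ℝ → ℝ) (y : ℝ → E) (a b : ℝ) (L : ℝ) : Prop :=
  ∀ ε > 0, ∃ δ > 0, ∀ P : TaggedPartition a b, P.MeshLT δ → |L - RiemannSum ν y P| < ε

/-- A suitable set of moduli of continuity `Θ = {θ_j^{[q₁,q₂]}}`. -/
structure IsSuitableModuli (Θ : ℕ → ℚ → ℚ → ℝ → ℝ) : Prop where
  continuousOn : ∀ (j : ℕ) (q₁ q₂ : ℚ), q₁ < q₂ → ContinuousOn (Θ j q₁ q₂) (Ici 0)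
  monotoneOn : ∀ (j : ℕ) (q₁ q₂ : ℚ), q₁ < q₂ → MonotoneOn (Θ j q₁ q₂) (Ici 0)
  map_zero : ∀ (j : ℕ) (q₁ q₂ : ℚ), q₁ < q₂ → Θ j q₁ q₂ 0 = 0
  nonneg : ∀ (j : ℕ) (q₁ q₂ : ℚ) (x : ℝ), q₁ < q₂ → 0 ≤ x → 0 ≤ Θ j q₁ q₂ x
  mono : ∀ (j₁ j₂ : ℕ) (q₁ q₂ p₁ p₂ : ℚ), j₁ ≤ j₂ → q₁ ≤ p₁ → p₁ < p₂ → p₂ ≤ q₂ →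
    ∀ x : ℝ, 0 ≤ x → Θ j₁ p₁ p₂ x ≤ Θ j₂ q₁ q₂ x

/-- The set `𝒦_j^I` of continuous functions `y : I → E`, `I = [q₁,q₂]`, bounded by `j`
and admitting `θ_j^I` as modulus of continuity. -/
def KSet (E : Type*) [NormedAddCommGroup E] (Θ : ℕ → ℚ → ℚ → ℝ → ℝ)
    (j : ℕ) (q₁ q₂ : ℚ) : Set (ℝ → E) :=
  {y | ContinuousOn y (Set.Icc (q₁ : ℝ) (q₂ : ℝ)) ∧
    (∀ t ∈ Set.Icc (q₁ : ℝ) (q₂ : ℝ), ‖y t‖ ≤ (j : ℝ)) ∧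
    ∀ t₁ ∈ Set.Icc (q₁ : ℝ) (q₂ : ℝ), ∀ t₂ ∈ Set.Icc (q₁ : ℝ) (q₂ : ℝ),
      ‖y t₁ - y t₂‖ ≤ Θ j q₁ q₂ |t₁ - t₂|}

/-- Convergence `ν_n → ν₀` in the topology `σ_Θ` : the integrals along curves of
`𝒦_j^I` converge uniformly, for every `j` and every compact interval `I` with
rational endpoints. -/
def SigmaThetaTendsto {E : Type*} [NormedAddCommGroup E] (Θ : ℕ → ℚ → ℚ → ℝ → ℝ)
    (ν : ℕ → E → Set ℝ → ℝ) (ν₀ : E → Set ℝ → ℝ) : Prop :=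
  ∀ (j : ℕ) (q₁ q₂ : ℚ), q₁ < q₂ → ∀ ε > 0, ∃ n₀ : ℕ, ∀ n ≥ n₀,
    ∀ y ∈ KSet E Θ j q₁ q₂, ∀ L L₀ : ℝ,
      IsCurveIntegral (ν n) y (q₁ : ℝ) (q₂ : ℝ) L →
      IsCurveIntegral ν₀ y (q₁ : ℝ) (q₂ : ℝ) L₀ → |L - L₀| < ε

/-- The time-translate `ν·t` of a parametric b-measure: `(ν·t)_y(A) = ν_y(A + t)`. -/
def BTranslate (ν : E → Set ℝ → ℝ) (t : ℝ) : E → Set ℝ → ℝ :=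
  fun y A => ν y ((fun s => s + t) '' A)

/-- The time-translate `m·t` of a Borel measure: `(m·t)(A) = m(A + t)`. -/
noncomputable def MTranslate (m : Measure ℝ) (t : ℝ) : Measure ℝ :=
  Measure.map (fun s => s - t) m

/-- An N-dimensional parametric b-measure on `E` with common m-bounds `m j` and
common Lipschitz l-bounds `l j`. -/
def IsNDimParamBMeasure {M : ℕ} (νbar : Fin M → E → Set ℝ → ℝ)
    (m l : ℕ → Measure ℝ) : Prop :=
  (∀ i y, IsBMeasure (νbar i y)) ∧
    ∀ j : ℕ, 1 ≤ j → GoodMeasure (m j) ∧ GoodMeasure (l j) ∧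
      (∀ i, ∀ y : E, ‖y‖ ≤ (j : ℝ) → TVLE (νbar i y) (m j)) ∧
      (∀ i, ∀ y₁ y₂ : E, ‖y₁‖ ≤ (j : ℝ) → ‖y₂‖ ≤ (j : ℝ) →
        DiffLE (νbar i y₁) (νbar i y₂) ‖y₁ - y₂‖ (l j))

/-- The oriented curve integral: `∫_b^a := -∫_a^b`. -/
def IsSignedCurveIntegral (ν : E → Set ℝ → ℝ) (y : ℝ → E) (a b : ℝ) (L : ℝ) : Prop :=
  (a ≤ b ∧ IsCurveIntegral ν y a b L) ∨ (b < a ∧ IsCurveIntegral ν y b a (-L))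

/-- `y` is a solution on `S` of the Cauchy problem `y' = ν̄_y`, `y(t₀) = y₀`, for the
N-dimensional parametric b-measure `ν̄`: componentwise,
`y_i(t) = y_{0,i} + ∫_{t₀}^t dν^i_{y(s)}`. -/
def IsSolutionOn {M : ℕ} (νbar : Fin M → EuclideanSpace ℝ (Fin M) → Set ℝ → ℝ)
    (t₀ : ℝ) (y₀ : EuclideanSpace ℝ (Fin M)) (S : Set ℝ)
    (y : ℝ → EuclideanSpace ℝ (Fin M)) : Prop :=
  t₀ ∈ S ∧ y t₀ = y₀ ∧ ContinuousOn y S ∧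
    ∀ t ∈ S, ∀ i : Fin M, IsSignedCurveIntegral (νbar i) y t₀ t (y t i - y₀ i)

/-- `y` is the maximal (noncontinuable) solution, defined on the open interval `S`:
every solution on an interval containing `t₀` is a restriction of `y`. -/
def IsMaximalSolution {M : ℕ} (νbar : Fin M → EuclideanSpace ℝ (Fin M) → Set ℝ → ℝ)
    (t₀ : ℝ) (y₀ : EuclideanSpace ℝ (Fin M)) (S : Set ℝ)
    (y : ℝ → EuclideanSpace ℝ (Fin M)) : Prop :=
  IsSolutionOn νbar t₀ y₀ S y ∧ IsOpen S ∧ S.OrdConnected ∧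
    ∀ S' : Set ℝ, S'.OrdConnected → ∀ z, IsSolutionOn νbar t₀ y₀ S' z →
      S' ⊆ S ∧ Set.EqOn z y S'

lemma bm_union {μ : Set ℝ → ℝ} (hμ : IsBMeasure μ) {B C : Set ℝ}
    (hBm : MeasurableSet B) (hCm : MeasurableSet C)
    (hBb : Bornology.IsBounded B) (hCb : Bornology.IsBounded C)
    (hd : Disjoint B C) : μ (B ∪ C) = μ B + μ C := by
  classical
  let A : ℕ → Set ℝ := fun n => if n = 0 then B else if n = 1 then C else ∅
  have hA0 : A 0 = B := rfl
  have hA1 : A 1 = C := rfl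
  have hA2 : ∀ n, A (n + 2) = ∅ := fun n => rfl
  have hU : (⋃ n, A n) = B ∪ C := by
    apply Set.Subset.antisymm
    · refine Set.iUnion_subset fun n => ?_
      rcases n with _ | _ | n
      · rw [hA0]; exact Set.subset_union_left
      · rw [hA1]; exact Set.subset_union_right
      · rw [hA2]; exact Set.empty_subset _
    · intro x hx
      rcases hx with hx | hx
      · exact Set.mem_iUnion.2 ⟨0, hx⟩
      · exact Set.mem_iUnion.2 ⟨1, hx⟩
  have hsum := hμ.countably_additive A
    (fun n => by rcases n with _ | _ | n
                 · rw [hA0]; exact hBm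
                 · rw [hA1]; exact hCm
                 · rw [hA2]; exact MeasurableSet.empty)
    (fun n => by rcases n with _ | _ | n
                 · rw [hA0]; exact hBb
                 · rw [hA1]; exact hCb
                 · rw [hA2]; exact Bornology.isBounded_empty)
    (by
      intro i k hik
      have key : ∀ n, A n = B ∨ A n = C ∨ A n = ∅ := by
        intro n; rcases n with _ | _ | n
        · exact Or.inl rfl
        · exact Or.inr (Or.inl rfl)
        · exact Or.inr (Or.inr rfl)
      rcases i with _ | _ | i <;> rcases k with _ | _ | k <;>
        simp only [Function.onFun, hA0, hA1, hA2] <;>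
        first
          | exact absurd rfl hik
          | exact hd
          | exact hd.symm
          | exact disjoint_bot_left
          | exact disjoint_bot_right)
    (by rw [hU]; exact hBb.union hCb)
  rw [hU] at hsum
  have hsum2 : HasSum (fun n => μ (A n)) (μ B + μ C) := by
    have hz : ∀ n ∉ ({0, 1} : Finset ℕ), μ (A n) = 0 := by
      intro n hn
      rcases n with _ | _ | n
      · simp at hn
      · simp at hn
      · rw [hA2]; exact hμ.empty
    have h : HasSum (fun n => μ (A n)) (∑ n ∈ ({0, 1} : Finset ℕ), μ (A n)) :=
      hasSum_sum_of_ne_finset_zero (s := ({0, 1} : Finset ℕ))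
      (f := fun n => μ (A n)) hz
    have he : ∑ n ∈ ({0, 1} : Finset ℕ), μ (A n) = μ B + μ C := by
      rw [Finset.sum_pair (by norm_num), hA0, hA1]
    rwa [he] at h
  exact hsum.unique hsum2

lemma bm_Icc_add {μ : Set ℝ → ℝ} (hμ : IsBMeasure μ) {u v w : ℝ}
    (huv : u ≤ v) (hvw : v ≤ w) :
    μ (Set.Icc u w) = μ (Set.Icc u v) + μ (Set.Icc v w) := by
  have h1 : μ (Set.Icc u w) = μ (Set.Icc u v) + μ (Set.Ioc v w) := by
    have he : Set.Icc u v ∪ Set.Ioc v w = Set.Icc u w := Set.Icc_union_Ioc_eq_Icc huv hvw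
    rw [← he, bm_union hμ measurableSet_Icc measurableSet_Ioc
      (Metric.isBounded_Icc _ _) (Metric.isBounded_Ioc _ _)
      (Set.disjoint_left.2 fun x hx hx' => absurd hx'.1 (not_lt.2 hx.2))]
  have h2 : μ (Set.Icc v w) = μ (Set.Ioc v w) := by
    have hu : ({v} : Set ℝ) ∪ Set.Ioc v w = Set.Icc v w := by
      ext x
      simp only [Set.mem_union, Set.mem_singleton_iff, Set.mem_Ioc, Set.mem_Icc]
      constructor
      · rintro (rfl | ⟨ha, hb⟩)
        · exact ⟨le_rfl, hvw⟩
        · exact ⟨le_of_lt ha, hb⟩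
      · rintro ⟨ha, hb⟩
        rcases eq_or_lt_of_le ha with h | h
        · exact Or.inl h.symm
        · exact Or.inr ⟨h, hb⟩
    rw [← hu, bm_union hμ (measurableSet_singleton v) measurableSet_Ioc
      Bornology.isBounded_singleton (Metric.isBounded_Ioc _ _)
      (Set.disjoint_left.2 fun x hx hx' => absurd hx'.1 (by rw [Set.mem_singleton_iff] at hx; rw [hx]; exact lt_irrefl v)),
      hμ.singleton]
    ring
  rw [h1, h2]

lemma seq_mono {t : ℕ → ℝ} {k : ℕ} (h : ∀ i < k, t i < t (i + 1)) :
    ∀ i j, i ≤ j → j ≤ k → t i ≤ t j := by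
  intro i j hij hjk
  induction j with
  | zero => simp_all
  | succ m ih =>
    rcases Nat.lt_or_ge i (m + 1) with hi | hi
    · exact le_trans (ih (Nat.lt_succ_iff.1 hi) (le_trans (Nat.le_succ m) hjk))
        (le_of_lt (h m (Nat.lt_of_lt_of_le (Nat.lt_succ_self m) hjk)))
    · have : i = m + 1 := le_antisymm hij hi
      simp [this]

lemma sum_Icc_eq {μ : Set ℝ → ℝ} (hμ : IsBMeasure μ) (t : ℕ → ℝ) :
    ∀ k : ℕ, (∀ i < k, t i < t (i + 1)) →
      ∑ i ∈ Finset.range k, μ (Set.Icc (t i) (t (i + 1))) = μ (Set.Icc (t 0) (t k)) := by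
  intro k
  induction k with
  | zero => simp [Set.Icc_self, hμ.singleton]
  | succ m ih =>
    intro h
    rw [Finset.sum_range_succ, ih (fun i hi => h i (Nat.lt_succ_of_lt hi)),
      ← bm_Icc_add hμ (seq_mono h 0 m (Nat.zero_le m) (Nat.le_succ m))
        (le_of_lt (h m (Nat.lt_succ_self m)))]
lemma TaggedPartition.t_mem {a b : ℝ} (P : TaggedPartition a b) {i : ℕ} (hi : i ≤ P.k) :
    P.t i ∈ Set.Icc a b := by
  have h1 := seq_mono P.lt 0 i (Nat.zero_le i) hi
  have h2 := seq_mono P.lt i P.k hi le_rfl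
  rw [P.left] at h1
  rw [P.right] at h2
  exact ⟨h1, h2⟩

lemma TaggedPartition.tag_mem' {a b : ℝ} (P : TaggedPartition a b) {i : ℕ} (hi : i < P.k) :
    P.tag i ∈ Set.Icc a b := by
  obtain ⟨h1, h2⟩ := P.tag_mem i hi
  exact ⟨le_trans (P.t_mem (le_of_lt hi)).1 h1, le_trans h2 (P.t_mem hi).2⟩

lemma RiemannSum_congr {E : Type*} [NormedAddCommGroup E] {ν : E → Set ℝ → ℝ}
    {y z : ℝ → E} {a b : ℝ} (P : TaggedPartition a b)
    (h : ∀ t ∈ Set.Icc a b, y t = z t) : RiemannSum ν y P = RiemannSum ν z P := by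
  unfold RiemannSum
  refine Finset.sum_congr rfl fun i hi => ?_
  rw [h _ (P.tag_mem' (Finset.mem_range.1 hi))]

lemma IsCurveIntegral_congr {E : Type*} [NormedAddCommGroup E] {ν : E → Set ℝ → ℝ}
    {y z : ℝ → E} {a b L : ℝ} (h : ∀ t ∈ Set.Icc a b, y t = z t)
    (hy : IsCurveIntegral ν y a b L) : IsCurveIntegral ν z a b L := by
  intro ε hε
  obtain ⟨δ, hδ, hP⟩ := hy ε hε
  exact ⟨δ, hδ, fun P hm => by rw [← RiemannSum_congr P h]; exact hP P hm⟩

lemma const_integral {E : Type*} [NormedAddCommGroup E] {ν : E → Set ℝ → ℝ}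
    (z : E) (hb : IsBMeasure (ν z)) (a b : ℝ) :
    IsCurveIntegral ν (fun _ => z) a b (ν z (Set.Icc a b)) := by
  intro ε hε
  refine ⟨1, one_pos, fun P _ => ?_⟩
  have : RiemannSum ν (fun _ => z) P = ν z (Set.Icc a b) := by
    unfold RiemannSum
    rw [sum_Icc_eq hb P.t P.k P.lt, P.left, P.right]
  rw [this, sub_self, abs_zero]
  exact hε

lemma diffLE_single {μ₁ μ₂ : Set ℝ → ℝ} {c : ℝ} {l : MeasureTheory.Measure ℝ}
    (h : DiffLE μ₁ μ₂ c l) {A : Set ℝ} (hAb : Bornology.IsBounded A)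
    (hAm : MeasurableSet A) : |μ₁ A - μ₂ A| ≤ c * (l A).toReal := by
  have hp : IsBorelPartition A (fun _ : Fin 1 => A) :=
    ⟨fun _ => hAm, Subsingleton.pairwise, Set.iUnion_const A⟩
  have := h A hAb hAm 1 (fun _ => A) hp
  simpa using this
lemma mk_Hunif {E : Type*} [NormedAddCommGroup E] {ν : E → Set ℝ → ℝ} {j : ℕ}
    {l : MeasureTheory.Measure ℝ} {ωj : ℝ → ℝ} (hL : HasLBound ωj ν j l)
    (hωc : ContinuousOn ωj (Set.Ici 0)) (hω0 : ωj 0 = 0)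
    {θ : ℝ → ℝ} (hθ0 : Filter.Tendsto θ (nhdsWithin 0 (Set.Ici 0)) (nhds 0))
    {y : ℝ → E} {a b : ℝ}
    (hyb : ∀ t ∈ Set.Icc a b, ‖y t‖ ≤ (j : ℝ))
    (hmod : ∀ t₁ ∈ Set.Icc a b, ∀ t₂ ∈ Set.Icc a b, ‖y t₁ - y t₂‖ ≤ θ |t₁ - t₂|) :
    ∀ η > 0, ∃ δ > 0, ∀ t₁ ∈ Set.Icc a b, ∀ t₂ ∈ Set.Icc a b, |t₁ - t₂| < δ →
      ∀ A : Set ℝ, A ⊆ Set.Icc a b → MeasurableSet A →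
        |ν (y t₁) A - ν (y t₂) A| ≤ η := by
  intro η hη
  haveI : MeasureTheory.IsLocallyFiniteMeasure l := hL.1.1
  have hfin : l (Set.Icc a b) < ⊤ := isCompact_Icc.measure_lt_top
  set C : ℝ := (l (Set.Icc a b)).toReal + 1 with hC
  have hC0 : 0 < C := by positivity
  have hωt : Filter.Tendsto ωj (nhdsWithin 0 (Set.Ici 0)) (nhds 0) := by
    have := (hωc 0 Set.self_mem_Ici).tendsto
    rwa [hω0] at this
  have h1 : {x : ℝ | ωj x < η / C} ∈ nhdsWithin 0 (Set.Ici 0) :=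
    hωt (Iio_mem_nhds (by positivity))
  obtain ⟨ρ, hρ, hball⟩ := Metric.mem_nhdsWithin_iff.1 h1
  have h2 : {s : ℝ | θ s < ρ} ∈ nhdsWithin 0 (Set.Ici 0) := hθ0 (Iio_mem_nhds hρ)
  obtain ⟨δ, hδ, hball2⟩ := Metric.mem_nhdsWithin_iff.1 h2
  refine ⟨δ, hδ, ?_⟩
  intro t₁ ht₁ t₂ ht₂ hlt A hA hAm
  have hθlt : θ |t₁ - t₂| < ρ := by
    refine hball2 (Set.mem_inter ?_ (Set.mem_Ici.2 (abs_nonneg _)))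
    rw [Metric.mem_ball, Real.dist_eq, sub_zero, abs_abs]; exact hlt
  have hωlt : ωj ‖y t₁ - y t₂‖ < η / C := by
    refine hball (Set.mem_inter ?_ (Set.mem_Ici.2 (norm_nonneg _)))
    rw [Metric.mem_ball, Real.dist_eq, sub_zero, abs_of_nonneg (norm_nonneg _)]
    exact lt_of_le_of_lt (hmod t₁ ht₁ t₂ ht₂) hθlt
  have hAb : Bornology.IsBounded A := (Metric.isBounded_Icc a b).subset hA
  have hb := diffLE_single (hL.2 (y t₁) (y t₂) (hyb t₁ ht₁) (hyb t₂ ht₂)) hAb hAm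
  have hm : (l A).toReal ≤ (l (Set.Icc a b)).toReal :=
    ENNReal.toReal_mono hfin.ne (MeasureTheory.measure_mono hA)
  calc |ν (y t₁) A - ν (y t₂) A| ≤ ωj ‖y t₁ - y t₂‖ * (l A).toReal := hb
    _ ≤ (η / C) * (l (Set.Icc a b)).toReal :=
        mul_le_mul (le_of_lt hωlt) hm ENNReal.toReal_nonneg (by positivity)
    _ ≤ (η / C) * C := by
        have hle : (l (Set.Icc a b)).toReal ≤ C := by rw [hC]; linarith
        exact mul_le_mul_of_nonneg_left hle (by positivity)
    _ = η := div_mul_cancel₀ η (ne_of_gt hC0)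
lemma concat {E : Type*} [NormedAddCommGroup E] {ν : E → Set ℝ → ℝ}
    (hbm : ∀ z, IsBMeasure (ν z)) {y : ℝ → E} {a c b : ℝ}
    (hac : a < c) (hcb : c < b)
    (H : ∀ η > 0, ∃ δ > 0, ∀ t₁ ∈ Set.Icc a b, ∀ t₂ ∈ Set.Icc a b, |t₁ - t₂| < δ →
      ∀ A : Set ℝ, A ⊆ Set.Icc a b → MeasurableSet A → |ν (y t₁) A - ν (y t₂) A| ≤ η)
    {L1 L2 : ℝ} (h1 : IsCurveIntegral ν y a c L1) (h2 : IsCurveIntegral ν y c b L2) :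
    IsCurveIntegral ν y a b (L1 + L2) := by
  classical
  intro ε hε
  obtain ⟨δ1, hδ1, H1⟩ := h1 (ε / 4) (by positivity)
  obtain ⟨δ2, hδ2, H2⟩ := h2 (ε / 4) (by positivity)
  obtain ⟨δ3, hδ3, H3⟩ := H (ε / 8) (by positivity)
  refine ⟨min (min δ1 δ2) δ3, by positivity, ?_⟩
  intro P hP
  have hmesh : ∀ i < P.k, P.t (i + 1) - P.t i < min (min δ1 δ2) δ3 := hP
  set pr : ℕ → Prop := fun i => P.t i ≤ c with hpr
  have hpr0 : pr 0 := by rw [hpr]; simp only [P.left]; exact le_of_lt hac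
  set i₀ : ℕ := Nat.findGreatest pr (P.k - 1) with hi₀
  have hi₀k : i₀ < P.k := lt_of_le_of_lt (Nat.findGreatest_le _)
    (Nat.sub_lt P.k_pos one_pos)
  have hti₀ : P.t i₀ ≤ c := Nat.findGreatest_spec (Nat.zero_le _) hpr0
  have hnext : c < P.t (i₀ + 1) := by
    rcases Nat.lt_or_ge (i₀ + 1) P.k with h | h
    · by_contra hcon
      exact Nat.findGreatest_is_greatest (Nat.lt_succ_self i₀)
        (by omega) (not_lt.1 hcon)
    · have he : i₀ + 1 = P.k := le_antisymm (by omega) h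
      rw [he, P.right]; exact hcb
  have htmem : ∀ i ≤ P.k, P.t i ∈ Set.Icc a b := fun i hi => P.t_mem hi
  have htagmem : ∀ i < P.k, P.tag i ∈ Set.Icc a b := fun i hi => P.tag_mem' hi
  set f : ℕ → ℝ := fun i => ν (y (P.tag i)) (Set.Icc (P.t i) (P.t (i + 1))) with hf
  rcases eq_or_lt_of_le hti₀ with heq | hlt
  · -- c is a node : P.t i₀ = c
    have hi₀pos : 0 < i₀ := by
      rcases Nat.eq_zero_or_pos i₀ with h | h
      · exfalso; rw [h, P.left] at heq; exact absurd heq (ne_of_lt hac)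
      · exact h
    set P1 : TaggedPartition a c :=
      ⟨i₀, hi₀pos, P.t, P.tag, P.left, heq,
        fun i hi => P.lt i (lt_trans hi hi₀k),
        fun i hi => P.tag_mem i (lt_trans hi hi₀k)⟩ with hP1
    set P2 : TaggedPartition c b :=
      ⟨P.k - i₀, by omega, fun i => P.t (i + i₀), fun i => P.tag (i + i₀),
        by simpa using heq,
        by show P.t (P.k - i₀ + i₀) = b
           have h0 : P.k - i₀ + i₀ = P.k := by omega
           rw [h0]; exact P.right,
        by intro i hi
           show P.t (i + i₀) < P.t (i + 1 + i₀)
           have h0 : i + 1 + i₀ = i + i₀ + 1 := by omega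
           rw [h0]; exact P.lt (i + i₀) (by omega),
        by intro i hi
           show P.tag (i + i₀) ∈ Set.Icc (P.t (i + i₀)) (P.t (i + 1 + i₀))
           have h0 : i + 1 + i₀ = i + i₀ + 1 := by omega
           rw [h0]; exact P.tag_mem (i + i₀) (by omega)⟩ with hP2
    have hm1 : P1.MeshLT δ1 := by
      intro i hi
      have hi' : i < i₀ := hi
      show P.t (i + 1) - P.t i < δ1
      exact lt_of_lt_of_le (hmesh i (lt_trans hi' hi₀k))
        (le_trans (min_le_left _ _) (min_le_left _ _))
    have hm2 : P2.MeshLT δ2 := by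
      intro i hi
      have hi' : i < P.k - i₀ := hi
      show P.t (i + 1 + i₀) - P.t (i + i₀) < δ2
      have h0 : i + 1 + i₀ = i + i₀ + 1 := by omega
      rw [h0]
      exact lt_of_lt_of_le (hmesh (i + i₀) (by omega))
        (le_trans (min_le_left _ _) (min_le_right _ _))
    have hsplit : RiemannSum ν y P = RiemannSum ν y P1 + RiemannSum ν y P2 := by
      show (∑ i ∈ Finset.range P.k, f i) =
        (∑ i ∈ Finset.range i₀, f i) +
          ∑ i ∈ Finset.range (P.k - i₀),
            ν (y (P.tag (i + i₀))) (Set.Icc (P.t (i + i₀)) (P.t (i + 1 + i₀)))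
      have hk : P.k = i₀ + (P.k - i₀) := by omega
      rw [hk, Finset.sum_range_add]
      have h0 : P.k - i₀ = i₀ + (P.k - i₀) - i₀ := by omega
      rw [← h0]
      congr 1
      refine Finset.sum_congr rfl fun i _ => ?_
      simp only [hf]
      have e1 : i₀ + i = i + i₀ := by omega
      have e2 : i + i₀ + 1 = i + 1 + i₀ := by omega
      rw [e1, e2]
    have e1 := H1 P1 hm1
    have e2 := H2 P2 hm2
    rw [hsplit]
    have habs : |L1 + L2 - (RiemannSum ν y P1 + RiemannSum ν y P2)|
        ≤ |L1 - RiemannSum ν y P1| + |L2 - RiemannSum ν y P2| := by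
      rw [show L1 + L2 - (RiemannSum ν y P1 + RiemannSum ν y P2) =
        (L1 - RiemannSum ν y P1) + (L2 - RiemannSum ν y P2) by ring]
      exact abs_add_le _ _
    linarith
  · -- P.t i₀ < c < P.t (i₀+1)
    set τ := P.tag i₀ with hτ
    set P1 : TaggedPartition a c :=
      ⟨i₀ + 1, Nat.succ_pos i₀,
        fun i => if i ≤ i₀ then P.t i else c,
        fun i => if i < i₀ then P.tag i else min τ c,
        by show (if 0 ≤ i₀ then P.t 0 else c) = a
           rw [if_pos (Nat.zero_le i₀)]; exact P.left,
        by show (if i₀ + 1 ≤ i₀ then P.t (i₀ + 1) else c) = c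
           rw [if_neg (by omega)],
        by intro i hi
           show (if i ≤ i₀ then P.t i else c) < (if i + 1 ≤ i₀ then P.t (i + 1) else c)
           rcases Nat.lt_or_ge i i₀ with h | h
           · rw [if_pos (le_of_lt h), if_pos (Nat.succ_le_of_lt h)]
             exact P.lt i (lt_trans h hi₀k)
           · have he : i = i₀ := by omega
             subst he
             rw [if_pos le_rfl, if_neg (by omega)]
             exact hlt,
        by intro i hi
           show (if i < i₀ then P.tag i else min τ c) ∈
             Set.Icc (if i ≤ i₀ then P.t i else c) (if i + 1 ≤ i₀ then P.t (i + 1) else c)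
           rcases Nat.lt_or_ge i i₀ with h | h
           · rw [if_pos h, if_pos (le_of_lt h), if_pos (Nat.succ_le_of_lt h)]
             exact P.tag_mem i (lt_trans h hi₀k)
           · have he : i = i₀ := by omega
             subst he
             rw [if_neg (lt_irrefl i₀), if_pos le_rfl, if_neg (by omega)]
             exact ⟨le_min (P.tag_mem i₀ hi₀k).1 (le_of_lt hlt), min_le_right _ _⟩⟩ with hP1
    set P2 : TaggedPartition c b :=
      ⟨P.k - i₀, by omega,
        fun i => if i = 0 then c else P.t (i + i₀),
        fun i => if i = 0 then max τ c else P.tag (i + i₀),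
        by show (if (0:ℕ) = 0 then c else P.t (0 + i₀)) = c
           rw [if_pos rfl],
        by show (if P.k - i₀ = 0 then c else P.t (P.k - i₀ + i₀)) = b
           rw [if_neg (by omega)]
           have h0 : P.k - i₀ + i₀ = P.k := by omega
           rw [h0]; exact P.right,
        by intro i hi
           have hi' : i < P.k - i₀ := hi
           show (if i = 0 then c else P.t (i + i₀)) < (if i + 1 = 0 then c else P.t (i + 1 + i₀))
           rcases Nat.eq_zero_or_pos i with h | h
           · subst h
             rw [if_pos rfl, if_neg (by omega)]
             have h0 : 0 + 1 + i₀ = i₀ + 1 := by omega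
             rw [h0]; exact hnext
           · rw [if_neg (by omega), if_neg (by omega)]
             have h0 : i + 1 + i₀ = i + i₀ + 1 := by omega
             rw [h0]; exact P.lt (i + i₀) (by omega),
        by intro i hi
           have hi' : i < P.k - i₀ := hi
           show (if i = 0 then max τ c else P.tag (i + i₀)) ∈
             Set.Icc (if i = 0 then c else P.t (i + i₀)) (if i + 1 = 0 then c else P.t (i + 1 + i₀))
           rcases Nat.eq_zero_or_pos i with h | h
           · subst h
             rw [if_pos rfl, if_pos rfl, if_neg (by omega)]
             have h0 : 0 + 1 + i₀ = i₀ + 1 := by omega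
             rw [h0]
             exact ⟨le_max_right _ _, max_le (P.tag_mem i₀ hi₀k).2 (le_of_lt hnext)⟩
           · rw [if_neg (by omega), if_neg (by omega), if_neg (by omega)]
             have h0 : i + 1 + i₀ = i + i₀ + 1 := by omega
             rw [h0]; exact P.tag_mem (i + i₀) (by omega)⟩ with hP2
    have hm1 : P1.MeshLT δ1 := by
      intro i hi
      have hi' : i < i₀ + 1 := hi
      show (if i + 1 ≤ i₀ then P.t (i + 1) else c) - (if i ≤ i₀ then P.t i else c) < δ1
      rcases Nat.lt_or_ge i i₀ with h | h
      · rw [if_pos (Nat.succ_le_of_lt h), if_pos (le_of_lt h)]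
        exact lt_of_lt_of_le (hmesh i (lt_trans h hi₀k))
          (le_trans (min_le_left _ _) (min_le_left _ _))
      · have he : i = i₀ := by omega
        subst he
        rw [if_neg (by omega), if_pos le_rfl]
        have hm := hmesh i₀ hi₀k
        have hc2 : c ≤ P.t (i₀ + 1) := le_of_lt hnext
        have hlt2 : c - P.t i₀ < min (min δ1 δ2) δ3 := by linarith
        exact lt_of_lt_of_le hlt2 (le_trans (min_le_left _ _) (min_le_left _ _))
    have hm2 : P2.MeshLT δ2 := by
      intro i hi
      have hi' : i < P.k - i₀ := hi
      show (if i + 1 = 0 then c else P.t (i + 1 + i₀)) - (if i = 0 then c else P.t (i + i₀)) < δ2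
      rcases Nat.eq_zero_or_pos i with h | h
      · subst h
        rw [if_neg (by omega), if_pos rfl]
        have h0 : 0 + 1 + i₀ = i₀ + 1 := by omega
        rw [h0]
        have hm := hmesh i₀ hi₀k
        have hlt2 : P.t (i₀ + 1) - c < min (min δ1 δ2) δ3 := by linarith
        exact lt_of_lt_of_le hlt2 (le_trans (min_le_left _ _) (min_le_right _ _))
      · rw [if_neg (by omega), if_neg (by omega)]
        have h0 : i + 1 + i₀ = i + i₀ + 1 := by omega
        rw [h0]
        exact lt_of_lt_of_le (hmesh (i + i₀) (by omega))
          (le_trans (min_le_left _ _) (min_le_right _ _))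
    set S1 : ℝ := ∑ i ∈ Finset.range i₀, f i with hS1
    set S3 : ℝ := ∑ i ∈ Finset.range (P.k - (i₀ + 1)), f (i₀ + 1 + i) with hS3
    set X1 : ℝ := ν (y (min τ c)) (Set.Icc (P.t i₀) c) with hX1
    set X2 : ℝ := ν (y (max τ c)) (Set.Icc c (P.t (i₀ + 1))) with hX2
    set Y1 : ℝ := ν (y τ) (Set.Icc (P.t i₀) c) with hY1
    set Y2 : ℝ := ν (y τ) (Set.Icc c (P.t (i₀ + 1))) with hY2
    have hRS1 : RiemannSum ν y P1 = S1 + X1 := by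
      show (∑ i ∈ Finset.range (i₀ + 1),
        ν (y (if i < i₀ then P.tag i else min τ c))
          (Set.Icc (if i ≤ i₀ then P.t i else c) (if i + 1 ≤ i₀ then P.t (i + 1) else c))) = S1 + X1
      rw [Finset.sum_range_succ]
      congr 1
      · refine Finset.sum_congr rfl fun i hi => ?_
        have hi' : i < i₀ := Finset.mem_range.1 hi
        rw [if_pos hi', if_pos (le_of_lt hi'), if_pos (Nat.succ_le_of_lt hi'), hf]
      · rw [if_neg (lt_irrefl i₀), if_pos le_rfl, if_neg (by omega)]
    have hRS2 : RiemannSum ν y P2 = X2 + S3 := by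
      show (∑ i ∈ Finset.range (P.k - i₀),
        ν (y (if i = 0 then max τ c else P.tag (i + i₀)))
          (Set.Icc (if i = 0 then c else P.t (i + i₀)) (if i + 1 = 0 then c else P.t (i + 1 + i₀)))) = X2 + S3
      have hk : P.k - i₀ = (P.k - (i₀ + 1)) + 1 := by omega
      rw [hk, Finset.sum_range_succ', add_comm]
      congr 1
      · rw [if_pos rfl, if_pos rfl, if_neg (by omega)]
        have h0 : 0 + 1 + i₀ = i₀ + 1 := by omega
        rw [h0]
      · refine Finset.sum_congr rfl fun i hi => ?_
        rw [if_neg (by omega : ¬ i + 1 = 0), if_neg (by omega : ¬ i + 1 = 0),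
          if_neg (by omega : ¬ i + 1 + 1 = 0), hf]
        have e1 : i + 1 + i₀ = i₀ + 1 + i := by omega
        have e2 : i + 1 + 1 + i₀ = i₀ + 1 + i + 1 := by omega
        rw [e1, e2]
    have hRSP : RiemannSum ν y P = S1 + f i₀ + S3 := by
      show (∑ i ∈ Finset.range P.k, f i) = S1 + f i₀ + S3
      have hk : P.k = (i₀ + 1) + (P.k - (i₀ + 1)) := by omega
      rw [hk, Finset.sum_range_add, Finset.sum_range_succ]
    -- the error estimates
    have hτi : τ ∈ Set.Icc (P.t i₀) (P.t (i₀ + 1)) := P.tag_mem i₀ hi₀k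
    have hτab : τ ∈ Set.Icc a b := htagmem i₀ hi₀k
    have htlo := (htmem i₀ (le_of_lt hi₀k)).1
    have hthi := (htmem (i₀ + 1) hi₀k).2
    have hminab : min τ c ∈ Set.Icc a b :=
      ⟨le_min hτab.1 (le_of_lt hac), le_trans (min_le_left _ _) hτab.2⟩
    have hmaxab : max τ c ∈ Set.Icc a b :=
      ⟨le_trans hτab.1 (le_max_left _ _), max_le hτab.2 (le_of_lt hcb)⟩
    have hlen : P.t (i₀ + 1) - P.t i₀ < δ3 :=
      lt_of_lt_of_le (hmesh i₀ hi₀k) (min_le_right _ _)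
    have hd1 : |τ - min τ c| < δ3 := by
      have h1 : P.t i₀ ≤ min τ c := le_min hτi.1 (le_of_lt hlt)
      have h2 : min τ c ≤ P.t (i₀ + 1) := le_trans (min_le_left _ _) hτi.2
      rw [abs_sub_lt_iff]
      constructor <;> [linarith [hτi.1, hτi.2]; linarith [hτi.1, hτi.2]]
    have hd2 : |τ - max τ c| < δ3 := by
      have h1 : P.t i₀ ≤ max τ c := le_trans hτi.1 (le_max_left _ _)
      have h2 : max τ c ≤ P.t (i₀ + 1) := max_le hτi.2 (le_of_lt hnext)
      rw [abs_sub_lt_iff]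
      constructor <;> [linarith [hτi.1, hτi.2]; linarith [hτi.1, hτi.2]]
    have hsubset1 : Set.Icc (P.t i₀) c ⊆ Set.Icc a b :=
      Set.Icc_subset_Icc htlo (le_of_lt hcb)
    have hsubset2 : Set.Icc c (P.t (i₀ + 1)) ⊆ Set.Icc a b :=
      Set.Icc_subset_Icc (le_of_lt hac) hthi
    have err1 : |Y1 - X1| ≤ ε / 8 :=
      H3 τ hτab (min τ c) hminab hd1 _ hsubset1 measurableSet_Icc
    have err2 : |Y2 - X2| ≤ ε / 8 :=
      H3 τ hτab (max τ c) hmaxab hd2 _ hsubset2 measurableSet_Icc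
    have hfsplit : f i₀ = Y1 + Y2 := by
      rw [hf, hY1, hY2, hτ]
      exact bm_Icc_add (hbm _) (le_of_lt hlt) (le_of_lt hnext)
    have e1 := H1 P1 hm1
    have e2 := H2 P2 hm2
    rw [hRS1] at e1
    rw [hRS2] at e2
    rw [hRSP, hfsplit]
    have key : L1 + L2 - (S1 + (Y1 + Y2) + S3) =
        (L1 - (S1 + X1)) + (L2 - (X2 + S3)) - (Y1 - X1) - (Y2 - X2) := by ring
    rw [key]
    obtain ⟨a1, a2⟩ := abs_lt.1 e1
    obtain ⟨b1, b2⟩ := abs_lt.1 e2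
    obtain ⟨c1, c2⟩ := abs_le.1 err1
    obtain ⟨d1, d2⟩ := abs_le.1 err2
    rw [abs_lt]
    constructor <;> linarith
/-- Clamp to an interval. -/
noncomputable def clampI (a b t : ℝ) : ℝ := max a (min t b)

lemma clampI_mem {a b : ℝ} (hab : a ≤ b) (t : ℝ) : clampI a b t ∈ Set.Icc a b :=
  ⟨le_max_left _ _, max_le hab (min_le_right _ _)⟩

lemma clampI_eq {a b t : ℝ} (ht : t ∈ Set.Icc a b) : clampI a b t = t := by
  unfold clampI
  rw [min_eq_left ht.2, max_eq_right ht.1]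

lemma clampI_right {a b t : ℝ} (hab : a ≤ b) (ht : b ≤ t) : clampI a b t = b := by
  unfold clampI
  rw [min_eq_right ht, max_eq_right hab]

lemma clampI_left {a b t : ℝ} (ht : t ≤ a) : clampI a b t = a := by
  unfold clampI
  rw [max_eq_left (le_trans (min_le_left _ _) ht)]

lemma clampI_cont (a b : ℝ) : Continuous (clampI a b) :=
  continuous_const.max (continuous_id.min continuous_const)

lemma clampI_lip (a b t₁ t₂ : ℝ) : |clampI a b t₁ - clampI a b t₂| ≤ |t₁ - t₂| := by
  unfold clampI
  calc |max a (min t₁ b) - max a (min t₂ b)|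
      ≤ max |a - a| |min t₁ b - min t₂ b| := abs_max_sub_max_le_max _ _ _ _
    _ = |min t₁ b - min t₂ b| := by simp
    _ ≤ max |t₁ - t₂| |b - b| := abs_min_sub_min_le_max _ _ _ _
    _ = |t₁ - t₂| := by simp

/-- Uniform convergence of interval integrals over curves of `KSet Θ j q₁ q₂`
on the interval `[a,b]`. -/
def ConvOn {E : Type*} [NormedAddCommGroup E] (Θ : ℕ → ℚ → ℚ → ℝ → ℝ)
    (ν : ℕ → E → Set ℝ → ℝ) (ν₀ : E → Set ℝ → ℝ)
    (j : ℕ) (q₁ q₂ a b : ℚ) : Prop :=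
  ∀ ε > 0, ∃ n₀ : ℕ, ∀ n ≥ n₀, ∀ y ∈ KSet E Θ j q₁ q₂, ∀ L L₀ : ℝ,
    IsCurveIntegral (ν n) y (a : ℝ) (b : ℝ) L →
    IsCurveIntegral ν₀ y (a : ℝ) (b : ℝ) L₀ → |L - L₀| < ε

section Shrink

variable {E : Type*} [NormedAddCommGroup E]
  {ω : ℕ → ℝ → ℝ} (hω : IsModulusFamily ω)
  {Θ : ℕ → ℚ → ℚ → ℝ → ℝ} (hΘ : IsSuitableModuli Θ)
  {ν : ℕ → E → Set ℝ → ℝ} {ν₀ : E → Set ℝ → ℝ}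
  (hν : ∀ n, IsParamBMeasure ω (ν n)) (hν₀ : IsParamBMeasure ω ν₀)
  (hconv : SigmaThetaTendsto Θ ν ν₀)
  {j : ℕ} (hj : 1 ≤ j) {q₁ q₂ : ℚ} (hq : q₁ < q₂)

include hω hΘ hν hν₀ hconv hj hq in
lemma shrink_right {a c b : ℚ} (hq1a : q₁ ≤ a) (hac : a < c) (hcb : c < b)
    (hbq : b ≤ q₂) (Hin : ConvOn Θ ν ν₀ j q₁ q₂ a b) :
    ConvOn Θ ν ν₀ j q₁ q₂ a c := by
  intro ε hε
  obtain ⟨n₁, hn₁⟩ := Hin (ε / 2) (by positivity)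
  obtain ⟨n₂, hn₂⟩ := hconv j c b hcb (ε / 2) (by positivity)
  refine ⟨max n₁ n₂, ?_⟩
  intro n hn y hy L L₀ hL hL₀
  obtain ⟨hycont, hybdd, hymod⟩ := hy
  have hqR : (q₁ : ℝ) < (q₂ : ℝ) := by exact_mod_cast hq
  have hq1aR : (q₁ : ℝ) ≤ (a : ℝ) := by exact_mod_cast hq1a
  have hacR : (a : ℝ) < (c : ℝ) := by exact_mod_cast hac
  have hcbR : (c : ℝ) < (b : ℝ) := by exact_mod_cast hcb
  have hbqR : (b : ℝ) ≤ (q₂ : ℝ) := by exact_mod_cast hbq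
  have hsub : Set.Icc (a : ℝ) (c : ℝ) ⊆ Set.Icc (q₁ : ℝ) (q₂ : ℝ) :=
    Set.Icc_subset_Icc hq1aR (le_trans (le_of_lt hcbR) hbqR)
  have hcmem : (c : ℝ) ∈ Set.Icc (q₁ : ℝ) (q₂ : ℝ) :=
    ⟨le_trans hq1aR (le_of_lt hacR), le_trans (le_of_lt hcbR) hbqR⟩
  set z : ℝ → E := fun t => y (clampI (a : ℝ) (c : ℝ) t) with hzdef
  have hclmem : ∀ t : ℝ, clampI (a : ℝ) (c : ℝ) t ∈ Set.Icc (q₁ : ℝ) (q₂ : ℝ) :=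
    fun t => hsub (clampI_mem (le_of_lt hacR) t)
  have hzbdd : ∀ t : ℝ, ‖z t‖ ≤ (j : ℝ) := fun t => hybdd _ (hclmem t)
  have hzmod : ∀ t₁ t₂ : ℝ, ‖z t₁ - z t₂‖ ≤ Θ j q₁ q₂ |t₁ - t₂| := by
    intro t₁ t₂
    refine le_trans (hymod _ (hclmem t₁) _ (hclmem t₂)) ?_
    exact hΘ.monotoneOn j q₁ q₂ hq (Set.mem_Ici.2 (abs_nonneg _))
      (Set.mem_Ici.2 (abs_nonneg _)) (clampI_lip _ _ _ _)
  have hzK : z ∈ KSet E Θ j q₁ q₂ := by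
    refine ⟨?_, fun t _ => hzbdd t, fun t₁ _ t₂ _ => hzmod t₁ t₂⟩
    exact ContinuousOn.comp hycont (clampI_cont _ _).continuousOn fun t _ => hclmem t
  set zc : ℝ → E := fun _ => y (c : ℝ) with hzcdef
  have hzcK : zc ∈ KSet E Θ j c b := by
    refine ⟨continuousOn_const, fun t _ => hybdd _ hcmem, fun t₁ _ t₂ _ => ?_⟩
    simp only [hzcdef, sub_self, norm_zero]
    exact hΘ.nonneg j c b _ hcb (abs_nonneg _)
  set An : ℝ := ν n (y (c : ℝ)) (Set.Icc (c : ℝ) (b : ℝ)) with hAn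
  set A0 : ℝ := ν₀ (y (c : ℝ)) (Set.Icc (c : ℝ) (b : ℝ)) with hA0
  have hIcn : IsCurveIntegral (ν n) zc (c : ℝ) (b : ℝ) An :=
    const_integral _ ((hν n).1 _) _ _
  have hIc0 : IsCurveIntegral ν₀ zc (c : ℝ) (b : ℝ) A0 :=
    const_integral _ (hν₀.1 _) _ _
  have hzeq1 : ∀ t ∈ Set.Icc (a : ℝ) (c : ℝ), y t = z t :=
    fun t ht => (congrArg y (clampI_eq ht)).symm
  have hzeq2 : ∀ t ∈ Set.Icc (c : ℝ) (b : ℝ), zc t = z t :=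
    fun t ht => (congrArg y (clampI_right (le_of_lt hacR) ht.1)).symm
  have hθ0 : Filter.Tendsto (Θ j q₁ q₂) (nhdsWithin 0 (Set.Ici 0)) (nhds 0) := by
    have := (hΘ.continuousOn j q₁ q₂ hq 0 Set.self_mem_Ici).tendsto
    rwa [hΘ.map_zero j q₁ q₂ hq] at this
  -- integral of z over [a,b] for ν n
  obtain ⟨mn, ln, hmn, hln⟩ := (hν n).2 j hj
  have Hn := mk_Hunif (y := z) (a := (a : ℝ)) (b := (b : ℝ)) hln
    (hω.continuousOn j) (hω.map_zero j) hθ0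
    (fun t _ => hzbdd t) (fun t₁ _ t₂ _ => hzmod t₁ t₂)
  have hBign : IsCurveIntegral (ν n) z (a : ℝ) (b : ℝ) (L + An) :=
    concat (hν n).1 hacR hcbR Hn (IsCurveIntegral_congr hzeq1 hL)
      (IsCurveIntegral_congr hzeq2 hIcn)
  -- integral of z over [a,b] for ν₀
  obtain ⟨m0, l0, hm0, hl0⟩ := hν₀.2 j hj
  have H0 := mk_Hunif (y := z) (a := (a : ℝ)) (b := (b : ℝ)) hl0
    (hω.continuousOn j) (hω.map_zero j) hθ0
    (fun t _ => hzbdd t) (fun t₁ _ t₂ _ => hzmod t₁ t₂)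
  have hBig0 : IsCurveIntegral ν₀ z (a : ℝ) (b : ℝ) (L₀ + A0) :=
    concat hν₀.1 hacR hcbR H0 (IsCurveIntegral_congr hzeq1 hL₀)
      (IsCurveIntegral_congr hzeq2 hIc0)
  have e1 := hn₁ n (le_trans (le_max_left _ _) hn) z hzK (L + An) (L₀ + A0) hBign hBig0
  have e2 := hn₂ n (le_trans (le_max_right _ _) hn) zc hzcK An A0 hIcn hIc0
  obtain ⟨a1, a2⟩ := abs_lt.1 e1
  obtain ⟨b1, b2⟩ := abs_lt.1 e2
  rw [abs_lt]
  constructor <;> linarith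

include hω hΘ hν hν₀ hconv hj hq in
lemma shrink_left {a c b : ℚ} (hq1a : q₁ ≤ a) (hac : a < c) (hcb : c < b)
    (hbq : b ≤ q₂) (Hin : ConvOn Θ ν ν₀ j q₁ q₂ a b) :
    ConvOn Θ ν ν₀ j q₁ q₂ c b := by
  intro ε hε
  obtain ⟨n₁, hn₁⟩ := Hin (ε / 2) (by positivity)
  obtain ⟨n₂, hn₂⟩ := hconv j a c hac (ε / 2) (by positivity)
  refine ⟨max n₁ n₂, ?_⟩
  intro n hn y hy L L₀ hL hL₀
  obtain ⟨hycont, hybdd, hymod⟩ := hy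
  have hqR : (q₁ : ℝ) < (q₂ : ℝ) := by exact_mod_cast hq
  have hq1aR : (q₁ : ℝ) ≤ (a : ℝ) := by exact_mod_cast hq1a
  have hacR : (a : ℝ) < (c : ℝ) := by exact_mod_cast hac
  have hcbR : (c : ℝ) < (b : ℝ) := by exact_mod_cast hcb
  have hbqR : (b : ℝ) ≤ (q₂ : ℝ) := by exact_mod_cast hbq
  have hsub : Set.Icc (c : ℝ) (b : ℝ) ⊆ Set.Icc (q₁ : ℝ) (q₂ : ℝ) :=
    Set.Icc_subset_Icc (le_trans hq1aR (le_of_lt hacR)) hbqR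
  have hcmem : (c : ℝ) ∈ Set.Icc (q₁ : ℝ) (q₂ : ℝ) :=
    ⟨le_trans hq1aR (le_of_lt hacR), le_trans (le_of_lt hcbR) hbqR⟩
  set z : ℝ → E := fun t => y (clampI (c : ℝ) (b : ℝ) t) with hzdef
  have hclmem : ∀ t : ℝ, clampI (c : ℝ) (b : ℝ) t ∈ Set.Icc (q₁ : ℝ) (q₂ : ℝ) :=
    fun t => hsub (clampI_mem (le_of_lt hcbR) t)
  have hzbdd : ∀ t : ℝ, ‖z t‖ ≤ (j : ℝ) := fun t => hybdd _ (hclmem t)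
  have hzmod : ∀ t₁ t₂ : ℝ, ‖z t₁ - z t₂‖ ≤ Θ j q₁ q₂ |t₁ - t₂| := by
    intro t₁ t₂
    refine le_trans (hymod _ (hclmem t₁) _ (hclmem t₂)) ?_
    exact hΘ.monotoneOn j q₁ q₂ hq (Set.mem_Ici.2 (abs_nonneg _))
      (Set.mem_Ici.2 (abs_nonneg _)) (clampI_lip _ _ _ _)
  have hzK : z ∈ KSet E Θ j q₁ q₂ := by
    refine ⟨?_, fun t _ => hzbdd t, fun t₁ _ t₂ _ => hzmod t₁ t₂⟩
    exact ContinuousOn.comp hycont (clampI_cont _ _).continuousOn fun t _ => hclmem t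
  set zc : ℝ → E := fun _ => y (c : ℝ) with hzcdef
  have hzcK : zc ∈ KSet E Θ j a c := by
    refine ⟨continuousOn_const, fun t _ => hybdd _ hcmem, fun t₁ _ t₂ _ => ?_⟩
    simp only [hzcdef, sub_self, norm_zero]
    exact hΘ.nonneg j a c _ hac (abs_nonneg _)
  set An : ℝ := ν n (y (c : ℝ)) (Set.Icc (a : ℝ) (c : ℝ)) with hAn
  set A0 : ℝ := ν₀ (y (c : ℝ)) (Set.Icc (a : ℝ) (c : ℝ)) with hA0
  have hIcn : IsCurveIntegral (ν n) zc (a : ℝ) (c : ℝ) An :=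
    const_integral _ ((hν n).1 _) _ _
  have hIc0 : IsCurveIntegral ν₀ zc (a : ℝ) (c : ℝ) A0 :=
    const_integral _ (hν₀.1 _) _ _
  have hzeq1 : ∀ t ∈ Set.Icc (c : ℝ) (b : ℝ), y t = z t :=
    fun t ht => (congrArg y (clampI_eq ht)).symm
  have hzeq2 : ∀ t ∈ Set.Icc (a : ℝ) (c : ℝ), zc t = z t :=
    fun t ht => (congrArg y (clampI_left ht.2)).symm
  have hθ0 : Filter.Tendsto (Θ j q₁ q₂) (nhdsWithin 0 (Set.Ici 0)) (nhds 0) := by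
    have := (hΘ.continuousOn j q₁ q₂ hq 0 Set.self_mem_Ici).tendsto
    rwa [hΘ.map_zero j q₁ q₂ hq] at this
  obtain ⟨mn, ln, hmn, hln⟩ := (hν n).2 j hj
  have Hn := mk_Hunif (y := z) (a := (a : ℝ)) (b := (b : ℝ)) hln
    (hω.continuousOn j) (hω.map_zero j) hθ0
    (fun t _ => hzbdd t) (fun t₁ _ t₂ _ => hzmod t₁ t₂)
  have hBign : IsCurveIntegral (ν n) z (a : ℝ) (b : ℝ) (An + L) :=
    concat (hν n).1 hacR hcbR Hn (IsCurveIntegral_congr hzeq2 hIcn)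
      (IsCurveIntegral_congr hzeq1 hL)
  obtain ⟨m0, l0, hm0, hl0⟩ := hν₀.2 j hj
  have H0 := mk_Hunif (y := z) (a := (a : ℝ)) (b := (b : ℝ)) hl0
    (hω.continuousOn j) (hω.map_zero j) hθ0
    (fun t _ => hzbdd t) (fun t₁ _ t₂ _ => hzmod t₁ t₂)
  have hBig0 : IsCurveIntegral ν₀ z (a : ℝ) (b : ℝ) (A0 + L₀) :=
    concat hν₀.1 hacR hcbR H0 (IsCurveIntegral_congr hzeq2 hIc0)
      (IsCurveIntegral_congr hzeq1 hL₀)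
  have e1 := hn₁ n (le_trans (le_max_left _ _) hn) z hzK (An + L) (A0 + L₀) hBign hBig0
  have e2 := hn₂ n (le_trans (le_max_right _ _) hn) zc hzcK An A0 hIcn hIc0
  obtain ⟨a1, a2⟩ := abs_lt.1 e1
  obtain ⟨b1, b2⟩ := abs_lt.1 e2
  rw [abs_lt]
  constructor <;> linarith

end Shrink

theorem stmt6 {N : ℕ} (ω : ℕ → ℝ → ℝ) (hω : IsModulusFamily ω)
    (Θ : ℕ → ℚ → ℚ → ℝ → ℝ) (hΘ : IsSuitableModuli Θ)
    (ν : ℕ → EuclideanSpace ℝ (Fin N) → Set ℝ → ℝ)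
    (ν₀ : EuclideanSpace ℝ (Fin N) → Set ℝ → ℝ)
    (hν : ∀ n, IsParamBMeasure ω (ν n)) (hν₀ : IsParamBMeasure ω ν₀)
    (hconv : SigmaThetaTendsto Θ ν ν₀)
    (j : ℕ) (hj : 1 ≤ j) (q₁ q₂ p₁ p₂ : ℚ)
    (h1 : q₁ ≤ p₁) (h2 : p₁ < p₂) (h3 : p₂ ≤ q₂) :
    ∀ ε > 0, ∃ n₀ : ℕ, ∀ n ≥ n₀,
      ∀ y ∈ KSet (EuclideanSpace ℝ (Fin N)) Θ j q₁ q₂, ∀ L L₀ : ℝ,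
        IsCurveIntegral (ν n) y (p₁ : ℝ) (p₂ : ℝ) L →
        IsCurveIntegral ν₀ y (p₁ : ℝ) (p₂ : ℝ) L₀ → |L - L₀| < ε := by
  have hq : q₁ < q₂ := lt_of_le_of_lt h1 (lt_of_lt_of_le h2 h3)
  have base : ConvOn Θ ν ν₀ j q₁ q₂ q₁ q₂ := fun ε hε => hconv j q₁ q₂ hq ε hε
  have step1 : ConvOn Θ ν ν₀ j q₁ q₂ q₁ p₂ := by
    rcases eq_or_lt_of_le h3 with h | h
    · subst h; exact base
    · exact shrink_right hω hΘ hν hν₀ hconv hj hq le_rfl (lt_of_le_of_lt h1 h2) h le_rfl base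
  have step2 : ConvOn Θ ν ν₀ j q₁ q₂ p₁ p₂ := by
    rcases eq_or_lt_of_le h1 with h | h
    · subst h; exact step1
    · exact shrink_left hω hΘ hν hν₀ hconv hj hq le_rfl h h2 h3 step1
  exact step2
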